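/- Let $p\ge 7$ be a prime and let $n\ge p$. Then the proportion of permutations $\tau\in S_n$ with the property that there exists a divisor $d$ of $p-1$ such that the cycle decomposition of $\tau$ contains at least $(p-1)/d$ cycles of length $d$ is at most $\sum_{a=1}^{\infty} \left(\frac{e}{p-1}\right)^a = \frac{e}{p-1-e}$. -/

import Mathlib

/-- The number of cycles of length `i` in the cycle decomposition of `σ`
(cycles of length `1` being fixed points). -/
def cycleCount {n : ℕ} (σ : Equiv.Perm (Fin n)) (i : ℕ) : ℕ :=
  if i = 1 then (Finset.univ.filter fun x => σ x = x).card
  else σ.cycleType.count i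

set_option linter.unusedSectionVars false
set_option linter.unusedVariables false

open Equiv Finset

variable {α : Type*} [Fintype α] [DecidableEq α]

-- power reduction
lemma pow_mod_apply (τ : Perm α) (x : α) {d : ℕ} (ha : (τ^d) x = x) (v : ℕ) :
    (τ^v) x = (τ^(v % d)) x := by
  conv_lhs => rw [← Nat.div_add_mod v d, Nat.add_comm]
  rw [pow_add, pow_mul, Equiv.Perm.mul_apply]
  have : ((τ^d)^(v/d)) x = x := by
    induction (v / d) with
    | zero => simp
    | succ q ih => rw [pow_succ, Equiv.Perm.mul_apply, ha, ih]
  rw [this]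

lemma pow_inj_of_lt (τ : Perm α) (x : α) {d : ℕ}
    (ha : (τ^d) x = x) (hb : ∀ t, 0 < t → t < d → (τ^t) x ≠ x)
    {v w : ℕ} (hv : v < d) (hw : w < d) (h : (τ^v) x = (τ^w) x) : v = w := by
  have key : ∀ t u : ℕ, (τ^t) ((τ^u) x) = (τ^u) x → (τ^t) x = x := by
    intro t u h
    apply (τ^u).injective
    rw [← Equiv.Perm.mul_apply, ← pow_add, Nat.add_comm, pow_add, Equiv.Perm.mul_apply]
    exact h
  rcases Nat.lt_trichotomy v w with hlt | he | hgt
  · exfalso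
    have : (τ^(w-v)) ((τ^v) x) = (τ^v) x := by
      rw [← Equiv.Perm.mul_apply, ← pow_add, Nat.sub_add_cancel hlt.le, h]
    exact hb (w - v) (by omega) (by omega) (key _ _ this)
  · exact he
  · exfalso
    have : (τ^(v-w)) ((τ^w) x) = (τ^w) x := by
      rw [← Equiv.Perm.mul_apply, ← pow_add, Nat.sub_add_cancel hgt.le, h.symm]
    exact hb (v - w) (by omega) (by omega) (key _ _ this)

/-- extraction: from `k ≤ cycleCount τ d` get an equivariant injection. -/
lemma exists_equivariant {n : ℕ} (τ : Perm (Fin n)) (d k : ℕ) (hd : 0 < d)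
    (h : k ≤ cycleCount τ d) :
    ∃ y : Fin k × Fin d → Fin n, Function.Injective y ∧
      ∀ i j, τ (y (i, j)) = y (i, finRotate d j) := by
  obtain ⟨x, hxa, hxb, hxc⟩ : ∃ x : Fin k → Fin n,
      (∀ i, (τ^d) (x i) = x i) ∧ (∀ i t, 0 < t → t < d → (τ^t) (x i) ≠ x i) ∧
      (∀ i i', i ≠ i' → ∀ s t : ℕ, (τ^s) (x i) ≠ (τ^t) (x i')) := by
    by_cases h1 : d = 1
    · subst h1
      rw [cycleCount, if_pos rfl] at h
      have hcard : Fintype.card (Fin k) ≤ Fintype.card {a : Fin n // τ a = a} := by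
        rw [Fintype.card_fin, Fintype.card_subtype]; exact h
      obtain ⟨e⟩ := Function.Embedding.nonempty_of_card_le hcard
      refine ⟨fun i => (e i).1, ?_, ?_, ?_⟩
      · intro i; simpa using (e i).2
      · intro i t ht1 ht2; omega
      · intro i i' hii s t
        have hs : (τ^s) (e i).1 = (e i).1 :=
          Equiv.Perm.pow_apply_eq_self_of_apply_eq_self (e i).2 s
        have ht : (τ^t) (e i').1 = (e i').1 :=
          Equiv.Perm.pow_apply_eq_self_of_apply_eq_self (e i').2 t
        rw [hs, ht]
        intro hEq
        exact hii (e.injective (Subtype.ext hEq))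
    · rw [cycleCount, if_neg h1, Equiv.Perm.cycleType_def, Multiset.count_map] at h
      set F := τ.cycleFactorsFinset.filter (fun c => d = c.support.card) with hF
      have hcard : k ≤ F.card := h
      obtain ⟨e⟩ := Function.Embedding.nonempty_of_card_le
        (show Fintype.card (Fin k) ≤ Fintype.card F by
          rw [Fintype.card_fin, Fintype.card_coe]; exact hcard)
      have hmem : ∀ i, ((e i : Perm (Fin n)) ∈ τ.cycleFactorsFinset) ∧
          d = (e i : Perm (Fin n)).support.card := by
        intro i
        exact Finset.mem_filter.mp (e i).2
      have hne : ∀ i, ((e i : Perm (Fin n)).support).Nonempty := by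
        intro i
        rw [← Finset.card_pos, ← (hmem i).2]
        exact hd
      set x : Fin k → Fin n := fun i => (hne i).choose with hx
      have hxs : ∀ i, x i ∈ (e i : Perm (Fin n)).support := fun i => (hne i).choose_spec
      have hco : ∀ i, (e i : Perm (Fin n)) = τ.cycleOf (x i) := fun i =>
        Equiv.Perm.cycle_is_cycleOf (hxs i) (hmem i).1
      have hcyc : ∀ i, τ.IsCycleOn (τ.cycleOf (x i)).support := fun i =>
        τ.isCycleOn_support_cycleOf (x i)
      have hxt : ∀ i, x i ∈ (τ.cycleOf (x i)).support := by
        intro i; rw [← hco i]; exact hxs i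
      have hcardd : ∀ i, (τ.cycleOf (x i)).support.card = d := by
        intro i; rw [← hco i]; exact ((hmem i).2).symm
      refine ⟨x, ?_, ?_, ?_⟩
      · intro i
        rw [(hcyc i).pow_apply_eq (hxt i), hcardd i]
      · intro i t ht1 ht2 hc
        rw [(hcyc i).pow_apply_eq (hxt i), hcardd i] at hc
        exact absurd (Nat.le_of_dvd ht1 hc) (Nat.not_le.mpr ht2)
      · intro i i' hii s t hEq
        have hsc : τ.SameCycle (x i) (x i') := by
          refine Equiv.Perm.SameCycle.trans ⟨(s : ℤ), by simpa using hEq⟩ ?_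
          exact Equiv.Perm.SameCycle.symm ⟨(t : ℤ), by simp⟩
        have : (e i : Perm (Fin n)) = (e i' : Perm (Fin n)) := by
          rw [hco i, hco i', hsc.cycleOf_eq]
        exact hii (e.injective (Subtype.ext this))
  obtain ⟨d', rfl⟩ := Nat.exists_eq_succ_of_ne_zero hd.ne'
  refine ⟨fun q => (τ ^ (q.2 : ℕ)) (x q.1), ?_, ?_⟩
  · rintro ⟨i, j⟩ ⟨i', j'⟩ hEq
    simp only at hEq
    by_cases hii : i = i'
    · subst hii
      exact Prod.ext rfl (Fin.ext (pow_inj_of_lt τ (x i) (hxa i) (hxb i) j.2 j'.2 hEq))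
    · exact absurd hEq (hxc i i' hii _ _)
  · intro i j
    simp only [finRotate_succ_apply]
    have h1 : ((j + 1 : Fin (d' + 1)) : ℕ) = ((j : ℕ) + 1) % (d' + 1) := by
      rw [Fin.val_add, Fin.val_one']
      exact Nat.add_mod_mod _ _ _
    rw [h1, ← pow_mod_apply τ (x i) (hxa i) ((j : ℕ) + 1)]
    rw [← Equiv.Perm.mul_apply, ← pow_succ']

/-- main counting bound -/
lemma main_count (n d k : ℕ) (hd : 0 < d) (hdk : k * d ≤ n) :
    (Finset.univ.filter fun τ : Perm (Fin n) => k ≤ cycleCount τ d).card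
      * (k.factorial * d ^ k) ≤ n.factorial := by
  obtain ⟨d', rfl⟩ := Nat.exists_eq_succ_of_ne_zero hd.ne'
  show (Finset.univ.filter fun τ : Perm (Fin n) => k ≤ cycleCount τ (d'+1)).card
      * (k.factorial * (d'+1) ^ k) ≤ n.factorial
  have hdk' : k * (d' + 1) ≤ n := hdk
  set d := d' + 1 with hdd
  set β := Fin k × Fin d with hβ
  set P : Perm (Fin n) → (β ↪ Fin n) → Prop :=
    fun τ g => ∀ i j, τ (g (i, j)) = g (i, finRotate d j) with hP
  set N : Perm (Fin n) → ℕ := fun τ => (Finset.univ.filter fun g => P τ g).card with hN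
  set M : (β ↪ Fin n) → ℕ := fun g => (Finset.univ.filter fun τ => P τ g).card with hM
  have swap : ∑ τ : Perm (Fin n), N τ = ∑ g : β ↪ Fin n, M g := by
    simp only [hN, hM, Finset.card_filter]
    exact Finset.sum_comm
  have cardβ : Fintype.card β = k * d := by
    simp [hβ, Fintype.card_prod]
  -- lower bound on N τ for τ in the filter set
  have lower : ∀ τ : Perm (Fin n), k ≤ cycleCount τ d →
      k.factorial * d ^ k ≤ N τ := by
    intro τ hτ
    obtain ⟨y, hyinj, hyeq⟩ := exists_equivariant τ d k hd hτ
    set Φ : Perm (Fin k) × (Fin k → Fin d) → (β ↪ Fin n) := fun z =>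
      ⟨fun q => y (z.1 q.1, z.2 q.1 + q.2), by
        rintro ⟨a, b⟩ ⟨a', b'⟩ hEq
        simp only at hEq
        obtain ⟨h1, h2⟩ := Prod.ext_iff.mp (hyinj hEq)
        have ha : a = a' := z.1.injective h1
        subst ha
        exact Prod.ext rfl (by rwa [add_right_inj] at h2)⟩ with hΦ
    have hmem : ∀ z, Φ z ∈ Finset.univ.filter fun g => P τ g := by
      rintro ⟨π, r⟩
      rw [Finset.mem_filter]
      refine ⟨Finset.mem_univ _, fun i j => ?_⟩
      show τ (y (π i, r i + j)) = y (π i, r i + finRotate d j)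
      rw [hyeq]
      congr 1
      rw [Prod.mk.injEq]
      refine ⟨rfl, ?_⟩
      show finRotate (d'+1) (r i + j) = r i + finRotate (d'+1) j
      simp only [finRotate_succ_apply]
      rw [add_assoc]
    have hinj : Function.Injective Φ := by
      rintro ⟨π, r⟩ ⟨π', r'⟩ hEq
      have key : ∀ i : Fin k, y (π i, r i + 0) = y (π' i, r' i + 0) := by
        intro i
        exact congrFun (congrArg (fun (e : β ↪ Fin n) => (e : β → Fin n)) hEq) (i, 0)
      have key2 : ∀ i : Fin k, π i = π' i ∧ r i = r' i := by
        intro i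
        obtain ⟨h1, h2⟩ := Prod.ext_iff.mp (hyinj (key i))
        exact ⟨h1, by simpa using h2⟩
      refine Prod.ext ?_ ?_
      · exact Equiv.ext fun i => (key2 i).1
      · exact funext fun i => (key2 i).2
    calc k.factorial * d ^ k
        = Fintype.card (Perm (Fin k) × (Fin k → Fin d)) := by
          simp [Fintype.card_prod, Fintype.card_perm, Fintype.card_fun]
      _ ≤ N τ := by
          rw [hN, ← Finset.card_univ]
          exact Finset.card_le_card_of_injOn Φ (fun z _ => hmem z) hinj.injOn
  -- upper bound on M g
  have upper : ∀ g : β ↪ Fin n, M g ≤ (n - k * d).factorial := by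
    intro g
    set S : Finset (Fin n) := Finset.univ.map g with hS
    have hSmem : ∀ τ, P τ g → ∀ a, a ∈ S ↔ τ a ∈ S := by
      intro τ hPg a
      constructor
      · intro ha
        obtain ⟨q, _, rfl⟩ := Finset.mem_map.mp ha
        obtain ⟨i, j⟩ := q
        rw [hPg i j]
        exact Finset.mem_map_of_mem g (Finset.mem_univ _)
      · intro ha
        obtain ⟨q, _, hq⟩ := Finset.mem_map.mp ha
        obtain ⟨i, j⟩ := q
        have : τ (g (i, (finRotate d).symm j)) = τ a := by
          rw [hPg i ((finRotate d).symm j), Equiv.apply_symm_apply, hq]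
        have := τ.injective this
        rw [← this]
        exact Finset.mem_map_of_mem g (Finset.mem_univ _)
    have hcompl : ∀ τ, P τ g → ∀ a : Fin n, a ∉ S ↔ τ a ∉ S :=
      fun τ h a => not_congr (hSmem τ h a)
    set F : Perm (Fin n) → Perm {a : Fin n // a ∉ S} := fun τ =>
      if h : P τ g then τ.subtypePerm (fun a => (hcompl τ h a).symm) else 1 with hF
    have hFinj : Set.InjOn F (Finset.univ.filter fun τ => P τ g) := by
      intro τ₁ h1 τ₂ h2 hEq
      rw [Finset.coe_filter] at h1 h2
      obtain ⟨-, h1⟩ := h1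
      obtain ⟨-, h2⟩ := h2
      rw [hF] at hEq
      simp only [dif_pos h1, dif_pos h2] at hEq
      refine Equiv.ext fun a => ?_
      by_cases ha : a ∈ S
      · obtain ⟨q, _, rfl⟩ := Finset.mem_map.mp ha
        obtain ⟨i, j⟩ := q
        rw [h1 i j, h2 i j]
      · have := congrArg (fun σ : Perm {a : Fin n // a ∉ S} => (σ ⟨a, ha⟩ : Fin n)) hEq
        simp only [Equiv.Perm.subtypePerm_apply] at this
        exact this
    have : M g ≤ Fintype.card (Perm {a : Fin n // a ∉ S}) := by
      rw [hM, ← Finset.card_univ]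
      exact Finset.card_le_card_of_injOn F
        (fun z _ => Finset.mem_univ _) (by exact_mod_cast hFinj)
    refine this.trans ?_
    rw [Fintype.card_perm]
    apply Nat.factorial_le
    rw [Fintype.card_subtype_compl, Fintype.card_fin]
    have h2 : Fintype.card {a : Fin n // a ∈ S} = k * d := by
      rw [Fintype.card_coe, hS, Finset.card_map, Finset.card_univ, cardβ]
    omega
  -- combine
  calc (Finset.univ.filter fun τ : Perm (Fin n) => k ≤ cycleCount τ d).card
      * (k.factorial * d ^ k)
      = ∑ τ ∈ Finset.univ.filter (fun τ : Perm (Fin n) => k ≤ cycleCount τ d),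
          (k.factorial * d ^ k) := by rw [Finset.sum_const, smul_eq_mul]
    _ ≤ ∑ τ ∈ Finset.univ.filter (fun τ : Perm (Fin n) => k ≤ cycleCount τ d), N τ :=
        Finset.sum_le_sum fun τ hτ => lower τ (Finset.mem_filter.mp hτ).2
    _ ≤ ∑ τ : Perm (Fin n), N τ :=
        Finset.sum_le_sum_of_subset (Finset.filter_subset _ _)
    _ = ∑ g : β ↪ Fin n, M g := swap
    _ ≤ ∑ _g : β ↪ Fin n, (n - k * d).factorial := Finset.sum_le_sum fun g _ => upper g
    _ = Fintype.card (β ↪ Fin n) * (n - k * d).factorial := by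
        rw [Finset.sum_const, smul_eq_mul, Finset.card_univ]
    _ = n.factorial := by
        rw [Fintype.card_embedding_eq, Fintype.card_fin, cardβ, mul_comm]
        exact Nat.factorial_mul_descFactorial hdk'

-- analytic helper : 1/(k! * d^k) ≤ (e/(k*d))^k
lemma term_bound (k d : ℕ) (hk : 0 < k) (hd : 0 < d) :
    (1 : ℝ) / (k.factorial * d ^ k) ≤ (Real.exp 1 / (k * d)) ^ k := by
  have hkR : (0:ℝ) < k := by exact_mod_cast hk
  have hdR : (0:ℝ) < d := by exact_mod_cast hd
  have hfac : (0:ℝ) < k.factorial := by exact_mod_cast k.factorial_pos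
  have hkk : (k:ℝ) ^ k ≤ Real.exp 1 ^ k * k.factorial := by
    have h1 : (k:ℝ) ^ k / k.factorial ≤ Real.exp k := by
      have h2 := Real.sum_le_exp_of_nonneg hkR.le (k + 1)
      refine le_trans ?_ h2
      have := Finset.single_le_sum (f := fun i => (k:ℝ) ^ i / i.factorial)
        (fun i _ => by positivity) (Finset.self_mem_range_succ k)
      simpa using this
    have h3 : Real.exp (k : ℝ) = Real.exp 1 ^ k := by
      rw [← Real.exp_nat_mul, mul_one]
    rw [div_le_iff₀ hfac] at h1
    rw [h3] at h1
    exact h1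
  rw [div_pow, div_le_div_iff₀ (by positivity) (by positivity), one_mul, mul_pow]
  calc (k:ℝ)^k * (d:ℝ)^k ≤ (Real.exp 1 ^ k * k.factorial) * (d:ℝ)^k := by
        apply mul_le_mul_of_nonneg_right hkk (by positivity)
    _ = Real.exp 1 ^ k * (k.factorial * d ^ k) := by ring

/-- For a prime `p ≥ 7` and `n ≥ p`, the proportion of `τ ∈ Sₙ` containing, for some
divisor `d` of `p - 1`, at least `(p-1)/d` cycles of length `d`, is at most
`∑_{a ≥ 1} (e/(p-1))^a = e / (p - 1 - e)`. -/
theorem proportion_perms_with_agl_pattern_le (p n : ℕ) (hp : p.Prime) (hp7 : 7 ≤ p)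
    (hn : p ≤ n) :
    (Nat.card {τ : Equiv.Perm (Fin n) //
        ∃ d : ℕ, d ∣ p - 1 ∧ (p - 1) / d ≤ cycleCount τ d} : ℝ) / (n.factorial : ℝ)
      ≤ Real.exp 1 / ((p : ℝ) - 1 - Real.exp 1) := by
  classical
  set m := p - 1 with hm
  have hm6 : 6 ≤ m := by omega
  have hmn : m ≤ n := by omega
  set E := Real.exp 1 with hE
  have hE0 : 0 < E := Real.exp_pos 1
  have hE3 : E < 3 := by
    have := Real.exp_one_lt_d9
    rw [hE]; linarith
  have hmR : (6:ℝ) ≤ (m:ℝ) := by exact_mod_cast hm6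
  have hfacpos : (0:ℝ) < (n.factorial : ℝ) := by exact_mod_cast n.factorial_pos
  -- step 1 : Nat.card to Finset card
  have hcardeq : (Nat.card {τ : Equiv.Perm (Fin n) //
      ∃ d : ℕ, d ∣ m ∧ m / d ≤ cycleCount τ d} : ℕ)
      = (Finset.univ.filter fun τ : Perm (Fin n) =>
          ∃ d : ℕ, d ∣ m ∧ m / d ≤ cycleCount τ d).card := by
    rw [Nat.card_eq_fintype_card, Fintype.card_subtype]
  -- step 2 : bound by sum over divisors
  have hsub : (Finset.univ.filter fun τ : Perm (Fin n) =>
        ∃ d : ℕ, d ∣ m ∧ m / d ≤ cycleCount τ d)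
      ⊆ m.divisors.biUnion (fun d =>
          Finset.univ.filter fun τ : Perm (Fin n) => m / d ≤ cycleCount τ d) := by
    intro τ hτ
    obtain ⟨-, d, hdvd, hle⟩ := Finset.mem_filter.mp hτ
    exact Finset.mem_biUnion.mpr ⟨d, Nat.mem_divisors.mpr ⟨hdvd, by omega⟩,
      Finset.mem_filter.mpr ⟨Finset.mem_univ _, hle⟩⟩
  have hcardle : ((Finset.univ.filter fun τ : Perm (Fin n) =>
        ∃ d : ℕ, d ∣ m ∧ m / d ≤ cycleCount τ d).card : ℝ)
      ≤ ∑ d ∈ m.divisors,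
          ((Finset.univ.filter fun τ : Perm (Fin n) => m / d ≤ cycleCount τ d).card : ℝ) := by
    have := (Finset.card_le_card hsub).trans (Finset.card_biUnion_le)
    exact_mod_cast this
  -- step 3 : per-divisor bound
  have hdivbound : ∀ d ∈ m.divisors,
      ((Finset.univ.filter fun τ : Perm (Fin n) => m / d ≤ cycleCount τ d).card : ℝ)
        / (n.factorial : ℝ) ≤ (E / m) ^ (m / d) := by
    intro d hd
    obtain ⟨hdvd, hm0⟩ := Nat.mem_divisors.mp hd
    have hd0 : 0 < d := Nat.pos_of_dvd_of_pos hdvd (by omega)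
    set k := m / d with hk
    have hkd : k * d = m := Nat.div_mul_cancel hdvd
    have hk0 : 0 < k := Nat.div_pos (Nat.le_of_dvd (by omega) hdvd) hd0
    have hmain := main_count n d k hd0 (hkd.le.trans hmn)
    have hcast : ((Finset.univ.filter fun τ : Perm (Fin n) => k ≤ cycleCount τ d).card : ℝ)
        * (k.factorial * d ^ k) ≤ (n.factorial : ℝ) := by exact_mod_cast hmain
    have hpos : (0:ℝ) < (k.factorial * d ^ k : ℝ) := by positivity
    have h1 : ((Finset.univ.filter fun τ : Perm (Fin n) => k ≤ cycleCount τ d).card : ℝ)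
        / (n.factorial : ℝ) ≤ 1 / (k.factorial * d ^ k : ℝ) := by
      rw [div_le_div_iff₀ hfacpos hpos, one_mul]
      linarith [hcast]
    refine h1.trans ?_
    have := term_bound k d hk0 hd0
    have hkdR : ((k : ℝ) * d) = (m:ℝ) := by exact_mod_cast congrArg (Nat.cast : ℕ → ℝ) hkd
    rw [hkdR] at this
    exact_mod_cast this
  -- step 4 : sum over divisors of (E/m)^(m/d) = sum of (E/m)^d
  have hx0 : (0:ℝ) < E / m := by positivity
  have hx1 : E / (m:ℝ) < 1 := by
    rw [div_lt_one (by linarith)]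
    linarith
  have hswap : ∑ d ∈ m.divisors, (E / m) ^ (m / d) = ∑ d ∈ m.divisors, (E / m) ^ d :=
    Nat.sum_div_divisors m (fun d => (E / m) ^ d)
  -- step 5 : bound divisor sum by geometric sum
  have hsubset : m.divisors ⊆ (Finset.range m).image (· + 1) := by
    intro d hd
    obtain ⟨hdvd, hm0⟩ := Nat.mem_divisors.mp hd
    have h1 : 1 ≤ d := Nat.pos_of_dvd_of_pos hdvd (by omega)
    have h2 : d ≤ m := Nat.le_of_dvd (by omega) hdvd
    exact Finset.mem_image.mpr ⟨d - 1, Finset.mem_range.mpr (by omega), by omega⟩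
  have hgeo : ∑ d ∈ m.divisors, (E / m) ^ d ≤ E / ((m:ℝ) - E) := by
    calc ∑ d ∈ m.divisors, (E / m) ^ d
        ≤ ∑ d ∈ (Finset.range m).image (· + 1), (E / m) ^ d :=
          Finset.sum_le_sum_of_subset_of_nonneg hsubset (fun i _ _ => by positivity)
      _ = ∑ j ∈ Finset.range m, (E / m) ^ (j + 1) :=
          Finset.sum_image (fun a _ b _ h => by omega)
      _ = (E / m) * ∑ j ∈ Finset.range m, (E / m) ^ j := by
          rw [Finset.mul_sum]
          exact Finset.sum_congr rfl fun j _ => by ring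
      _ ≤ (E / m) * (1 - E / m)⁻¹ := by
          apply mul_le_mul_of_nonneg_left _ hx0.le
          rw [geom_sum_eq (ne_of_lt hx1)]
          have h1 : (0:ℝ) < 1 - E / m := by linarith
          rw [← neg_div_neg_eq, neg_sub, neg_sub, inv_eq_one_div]
          exact div_le_div₀ zero_le_one
            (by nlinarith [pow_nonneg hx0.le m]) h1 le_rfl
      _ = E / ((m:ℝ) - E) := by
          have hm0 : (m:ℝ) ≠ 0 := by linarith
          have hme : (m:ℝ) - E ≠ 0 := by nlinarith
          field_simp
  -- assemble
  have hmcast : ((m:ℕ):ℝ) = (p:ℝ) - 1 := by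
    rw [hm, Nat.cast_sub (by omega : 1 ≤ p), Nat.cast_one]
  rw [hcardeq]
  calc ((Finset.univ.filter fun τ : Perm (Fin n) =>
        ∃ d : ℕ, d ∣ m ∧ m / d ≤ cycleCount τ d).card : ℝ) / (n.factorial : ℝ)
      ≤ (∑ d ∈ m.divisors,
          ((Finset.univ.filter fun τ : Perm (Fin n) => m / d ≤ cycleCount τ d).card : ℝ))
          / (n.factorial : ℝ) := by
        gcongr
    _ = ∑ d ∈ m.divisors,
          ((Finset.univ.filter fun τ : Perm (Fin n) => m / d ≤ cycleCount τ d).card : ℝ)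
          / (n.factorial : ℝ) := Finset.sum_div _ _ _
    _ ≤ ∑ d ∈ m.divisors, (E / m) ^ (m / d) := Finset.sum_le_sum hdivbound
    _ = ∑ d ∈ m.divisors, (E / m) ^ d := hswap
    _ ≤ E / ((m:ℝ) - E) := hgeo
    _ = E / ((p:ℝ) - 1 - E) := by rw [hmcast]
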